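/- The function q(μ) = I₁(μ)/(2 I₀(μ)) is a bijection from ℝ onto the open interval (−1/2, 1/2); that is, for every q ∈ (−1/2, 1/2) there exists a unique μ ∈ ℝ with I₁(μ)/(2 I₀(μ)) = q. (This is the existence and uniqueness of the two-dimensional Bingham closure in eigenvalue form.) -/

import Mathlib

open Real Filter

/-- The modified Bessel function of integer order `n`:
`Iₙ(μ) = (1/(2π)) ∫₀^{2π} e^{μ cos θ} cos (n θ) dθ`. -/
noncomputable def besselI (n : ℤ) (μ : ℝ) : ℝ :=
  (1 / (2 * Real.pi)) * ∫ θ in (0:ℝ)..(2 * Real.pi),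
    Real.exp (μ * Real.cos θ) * Real.cos ((n : ℝ) * θ)

open MeasureTheory intervalIntegral

noncomputable def FF (f : ℝ → ℝ) (μ : ℝ) : ℝ :=
  ∫ θ in (0:ℝ)..(2 * Real.pi), Real.exp (μ * Real.cos θ) * f θ

lemma cont_integrand (f : ℝ → ℝ) (hf : Continuous f) (μ : ℝ) :
    Continuous fun θ => Real.exp (μ * Real.cos θ) * f θ :=
  ((Real.continuous_exp.comp (continuous_const.mul Real.continuous_cos)).mul hf)

lemma FF_hasDerivAt (f : ℝ → ℝ) (hf : Continuous f) (μ₀ : ℝ) :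
    HasDerivAt (FF f) (FF (fun θ => Real.cos θ * f θ) μ₀) μ₀ := by
  have key := intervalIntegral.hasDerivAt_integral_of_dominated_loc_of_deriv_le
    (F := fun μ θ => Real.exp (μ * Real.cos θ) * f θ)
    (F' := fun μ θ => Real.cos θ * (Real.exp (μ * Real.cos θ) * f θ))
    (x₀ := μ₀) (a := 0) (b := 2 * Real.pi) (μ := volume)
    (bound := fun θ => Real.exp (|μ₀| + 1) * |f θ|)
    (s := Metric.ball μ₀ 1) (Metric.ball_mem_nhds μ₀ one_pos)
    (Eventually.of_forall fun x => (cont_integrand f hf x).aestronglyMeasurable)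
    ((cont_integrand f hf μ₀).intervalIntegrable _ _)
    ((continuous_cos.mul (cont_integrand f hf μ₀)).aestronglyMeasurable)
    ?_ ((continuous_const.mul hf.abs).intervalIntegrable _ _) ?_
  · have : (FF (fun θ => Real.cos θ * f θ) μ₀) =
        ∫ θ in (0:ℝ)..(2*Real.pi), Real.cos θ * (Real.exp (μ₀ * Real.cos θ) * f θ) := by
      unfold FF; congr 1; ext θ; ring
    rw [this]
    exact key.2
  · refine Eventually.of_forall fun θ _ x hx => ?_
    have h1 : |Real.cos θ| ≤ 1 := Real.abs_cos_le_one θ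
    have h2 : Real.exp (x * Real.cos θ) ≤ Real.exp (|μ₀| + 1) := by
      apply Real.exp_le_exp.2
      have hx' : |x| ≤ |μ₀| + 1 := by
        have := mem_ball_iff_norm.1 hx
        have := abs_sub_abs_le_abs_sub x μ₀
        simp only [Real.norm_eq_abs] at *
        linarith
      calc x * Real.cos θ ≤ |x * Real.cos θ| := le_abs_self _
        _ = |x| * |Real.cos θ| := abs_mul _ _
        _ ≤ (|μ₀| + 1) * 1 := by
            apply mul_le_mul hx' h1 (abs_nonneg _) (by positivity)
        _ = |μ₀| + 1 := by ring
    have : ‖Real.cos θ * (Real.exp (x * Real.cos θ) * f θ)‖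
        = |Real.cos θ| * (Real.exp (x * Real.cos θ) * |f θ|) := by
      simp [abs_mul, (Real.exp_pos _).le, abs_of_nonneg (Real.exp_pos _).le]
    rw [this]
    calc |Real.cos θ| * (Real.exp (x * Real.cos θ) * |f θ|)
        ≤ 1 * (Real.exp (|μ₀| + 1) * |f θ|) := by
          apply mul_le_mul h1 _ (by positivity) one_pos.le
          exact mul_le_mul_of_nonneg_right h2 (abs_nonneg _)
      _ = Real.exp (|μ₀| + 1) * |f θ| := by ring
  · refine Eventually.of_forall fun θ _ x _ => ?_
    have : HasDerivAt (fun μ : ℝ => μ * Real.cos θ) (Real.cos θ) x := by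
      simpa using (hasDerivAt_id x).mul_const (Real.cos θ)
    simpa [mul_comm, mul_assoc, mul_left_comm] using ((this.exp).mul_const (f θ))

/-- Lower bound for an integral of a nonneg function via a subinterval. -/
lemma integral_ge_sub (f : ℝ → ℝ) (hf : Continuous f) (hnn : ∀ θ, 0 ≤ f θ)
    {a b c : ℝ} (ha : 0 ≤ a) (hab : a ≤ b) (hb : b ≤ 2 * Real.pi)
    (hc : ∀ θ ∈ Set.Icc a b, c ≤ f θ) :
    c * (b - a) ≤ ∫ θ in (0:ℝ)..(2 * Real.pi), f θ := by
  have hi : ∀ u v : ℝ, IntervalIntegrable f volume u v := fun u v => hf.intervalIntegrable u v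
  have h1 : (∫ θ in (0:ℝ)..(2*Real.pi), f θ)
      = (∫ θ in (0:ℝ)..a, f θ) + (∫ θ in a..b, f θ) + (∫ θ in b..(2*Real.pi), f θ) := by
    rw [intervalIntegral.integral_add_adjacent_intervals (hi 0 a) (hi a b),
      intervalIntegral.integral_add_adjacent_intervals _ (hi b _)]
    exact (hi 0 a).trans (hi a b)
  have h2 : (0:ℝ) ≤ ∫ θ in (0:ℝ)..a, f θ :=
    intervalIntegral.integral_nonneg ha (fun x _ => hnn x)
  have h3 : (0:ℝ) ≤ ∫ θ in b..(2*Real.pi), f θ :=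
    intervalIntegral.integral_nonneg hb (fun x _ => hnn x)
  have h4 : c * (b - a) ≤ ∫ θ in a..b, f θ := by
    have := intervalIntegral.integral_mono_on (f := fun _ => c) (g := f) hab
      (intervalIntegrable_const) (hi a b) hc
    simpa [mul_comm] using this
  linarith

lemma FF_one_pos (μ : ℝ) : 0 < FF (fun _ => 1) μ := by
  apply intervalIntegral.intervalIntegral_pos_of_pos
  · exact (cont_integrand _ continuous_const μ).intervalIntegrable _ _
  · intro x; positivity
  · exact Real.two_pi_pos

lemma FF_sub (f g : ℝ → ℝ) (hf : Continuous f) (hg : Continuous g) (μ : ℝ) :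
    FF (fun θ => f θ - g θ) μ = FF f μ - FF g μ := by
  unfold FF
  rw [← intervalIntegral.integral_sub ((cont_integrand f hf μ).intervalIntegrable _ _)
    ((cont_integrand g hg μ).intervalIntegrable _ _)]
  congr 1; ext θ; ring

lemma FF_add (f g : ℝ → ℝ) (hf : Continuous f) (hg : Continuous g) (μ : ℝ) :
    FF (fun θ => f θ + g θ) μ = FF f μ + FF g μ := by
  unfold FF
  rw [← intervalIntegral.integral_add ((cont_integrand f hf μ).intervalIntegrable _ _)
    ((cont_integrand g hg μ).intervalIntegrable _ _)]
  congr 1; ext θ; ring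

lemma FF_const_mul (f : ℝ → ℝ) (c : ℝ) (μ : ℝ) :
    FF (fun θ => c * f θ) μ = c * FF f μ := by
  unfold FF
  rw [← intervalIntegral.integral_const_mul]
  congr 1; ext θ; ring

lemma exp_mul_cos_ge (μ θ : ℝ) : Real.exp (-|μ|) ≤ Real.exp (μ * Real.cos θ) := by
  apply Real.exp_le_exp.2
  have h1 : |μ * Real.cos θ| ≤ |μ| := by
    rw [abs_mul]
    calc |μ| * |Real.cos θ| ≤ |μ| * 1 :=
          mul_le_mul_of_nonneg_left (Real.abs_cos_le_one θ) (abs_nonneg μ)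
      _ = |μ| := mul_one _
  linarith [neg_abs_le (μ * Real.cos θ)]

lemma G_lt_F (μ : ℝ) : FF Real.cos μ < FF (fun _ => 1) μ := by
  have h : FF (fun θ => 1 - Real.cos θ) μ = FF (fun _ => 1) μ - FF Real.cos μ :=
    FF_sub _ _ continuous_const Real.continuous_cos μ
  have hpos : 0 < FF (fun θ => 1 - Real.cos θ) μ := by
    have key := integral_ge_sub (fun θ => Real.exp (μ * Real.cos θ) * (1 - Real.cos θ))
      (cont_integrand _ (continuous_const.sub Real.continuous_cos) μ)
      (fun θ => by
        have := Real.cos_le_one θ; have := (Real.exp_pos (μ * Real.cos θ)).le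
        nlinarith)
      (a := Real.pi / 2) (b := Real.pi / 2 + Real.pi) (c := Real.exp (-|μ|))
      (by positivity) (by linarith [Real.pi_pos]) (by linarith [Real.pi_pos])
      (fun θ hθ => by
        have hc : Real.cos θ ≤ 0 :=
          Real.cos_nonpos_of_pi_div_two_le_of_le hθ.1 (by linarith [hθ.2])
        have := exp_mul_cos_ge μ θ
        nlinarith [Real.exp_pos (μ * Real.cos θ)])
    have : 0 < Real.exp (-|μ|) * (Real.pi / 2 + Real.pi - Real.pi / 2) := by
      have := Real.pi_pos; have := Real.exp_pos (-|μ|); nlinarith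
    calc (0:ℝ) < _ := this
      _ ≤ _ := key
  linarith [h ▸ hpos]

lemma neg_F_lt_G (μ : ℝ) : -FF (fun _ => 1) μ < FF Real.cos μ := by
  have h : FF (fun θ => 1 + Real.cos θ) μ = FF (fun _ => 1) μ + FF Real.cos μ :=
    FF_add _ _ continuous_const Real.continuous_cos μ
  have hpos : 0 < FF (fun θ => 1 + Real.cos θ) μ := by
    have key := integral_ge_sub (fun θ => Real.exp (μ * Real.cos θ) * (1 + Real.cos θ))
      (cont_integrand _ (continuous_const.add Real.continuous_cos) μ)
      (fun θ => by
        have := Real.neg_one_le_cos θ; have := (Real.exp_pos (μ * Real.cos θ)).le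
        nlinarith)
      (a := 0) (b := Real.pi / 2) (c := Real.exp (-|μ|))
      le_rfl (by positivity) (by linarith [Real.pi_pos])
      (fun θ hθ => by
        have hc : 0 ≤ Real.cos θ :=
          Real.cos_nonneg_of_mem_Icc ⟨by have := hθ.1; have := Real.pi_pos; linarith, hθ.2⟩
        have := exp_mul_cos_ge μ θ
        nlinarith [Real.exp_pos (μ * Real.cos θ)])
    have : 0 < Real.exp (-|μ|) * (Real.pi / 2 - 0) := by
      have := Real.pi_pos; have := Real.exp_pos (-|μ|); nlinarith
    calc (0:ℝ) < _ := this
      _ ≤ _ := key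
  linarith [h ▸ hpos]

lemma variance_pos (μ m : ℝ) : 0 < FF (fun θ => (Real.cos θ - m) ^ 2) μ := by
  have hpi := Real.pi_pos
  have hcontsq : Continuous fun θ => (Real.cos θ - m) ^ 2 :=
    (Real.continuous_cos.sub continuous_const).pow 2
  have hnn : ∀ θ, 0 ≤ Real.exp (μ * Real.cos θ) * (Real.cos θ - m) ^ 2 := fun θ => by
    positivity
  rcases le_or_gt m 0 with hm | hm
  · have key := integral_ge_sub _ (cont_integrand _ hcontsq μ) hnn
      (a := 0) (b := Real.pi / 3) (c := Real.exp (-|μ|) * (1/4))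
      le_rfl (by positivity) (by linarith)
      (fun θ hθ => by
        have h1 : Real.cos (Real.pi / 3) ≤ Real.cos θ :=
          Real.cos_le_cos_of_nonneg_of_le_pi hθ.1 (by linarith) hθ.2
        rw [Real.cos_pi_div_three] at h1
        have h2 := exp_mul_cos_ge μ θ
        have h3 : (1/4 : ℝ) ≤ (Real.cos θ - m) ^ 2 := by nlinarith
        have := (Real.exp_pos (-|μ|)).le
        nlinarith [Real.exp_pos (μ * Real.cos θ)])
    have h0 : 0 < Real.exp (-|μ|) * (1/4) * (Real.pi / 3 - 0) := by
      nlinarith [Real.exp_pos (-|μ|)]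
    unfold FF; linarith
  · have key := integral_ge_sub _ (cont_integrand _ hcontsq μ) hnn
      (a := 2 * Real.pi / 3) (b := Real.pi) (c := Real.exp (-|μ|) * (1/4))
      (by positivity) (by linarith) (by linarith)
      (fun θ hθ => by
        have h1 : Real.cos θ ≤ Real.cos (2 * Real.pi / 3) :=
          Real.cos_le_cos_of_nonneg_of_le_pi (by positivity) hθ.2 hθ.1
        have h1' : Real.cos (2 * Real.pi / 3) = -(1/2) := by
          have : (2 : ℝ) * Real.pi / 3 = Real.pi - Real.pi / 3 := by ring
          rw [this, Real.cos_pi_sub, Real.cos_pi_div_three]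
        rw [h1'] at h1
        have h2 := exp_mul_cos_ge μ θ
        have h3 : (1/4 : ℝ) ≤ (Real.cos θ - m) ^ 2 := by nlinarith
        have := (Real.exp_pos (-|μ|)).le
        nlinarith [Real.exp_pos (μ * Real.cos θ)])
    have h0 : 0 < Real.exp (-|μ|) * (1/4) * (Real.pi - 2 * Real.pi / 3) := by
      nlinarith [Real.exp_pos (-|μ|)]
    unfold FF; linarith

noncomputable def rr (μ : ℝ) : ℝ := FF Real.cos μ / FF (fun _ => 1) μ

lemma rr_lt_one (μ : ℝ) : rr μ < 1 :=
  (div_lt_one (FF_one_pos μ)).2 (G_lt_F μ)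

lemma neg_one_lt_rr (μ : ℝ) : -1 < rr μ := by
  rw [rr, lt_div_iff₀ (FF_one_pos μ)]
  have := neg_F_lt_G μ; linarith

lemma F_hasDerivAt (μ : ℝ) : HasDerivAt (FF (fun _ => 1)) (FF Real.cos μ) μ := by
  have := FF_hasDerivAt (fun _ => 1) continuous_const μ
  simpa using this

lemma G_hasDerivAt (μ : ℝ) :
    HasDerivAt (FF Real.cos) (FF (fun θ => (Real.cos θ) ^ 2) μ) μ := by
  have := FF_hasDerivAt Real.cos Real.continuous_cos μ
  have h : (fun θ => Real.cos θ * Real.cos θ) = fun θ => (Real.cos θ) ^ 2 := by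
    ext θ; ring
  rwa [h] at this

lemma rr_deriv_pos (μ : ℝ) :
    HasDerivAt rr ((FF (fun θ => (Real.cos θ)^2) μ * FF (fun _ => 1) μ
      - FF Real.cos μ * FF Real.cos μ) / (FF (fun _ => 1) μ) ^ 2) μ ∧
    0 < (FF (fun θ => (Real.cos θ)^2) μ * FF (fun _ => 1) μ
      - FF Real.cos μ * FF Real.cos μ) / (FF (fun _ => 1) μ) ^ 2 := by
  have hF := FF_one_pos μ
  constructor
  · exact (G_hasDerivAt μ).div (F_hasDerivAt μ) hF.ne'
  · set Fv := FF (fun _ => 1) μ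
    set Gv := FF Real.cos μ
    set Hv := FF (fun θ => (Real.cos θ)^2) μ
    have hV : FF (fun θ => (Real.cos θ - Gv / Fv) ^ 2) μ
        = Hv - 2 * (Gv / Fv) * Gv + (Gv / Fv) ^ 2 * Fv := by
      have e1 : (fun θ => (Real.cos θ - Gv / Fv) ^ 2)
          = fun θ => ((Real.cos θ)^2 - (2 * (Gv/Fv)) * Real.cos θ)
              + (Gv/Fv)^2 * 1 := by
        ext θ; ring
      rw [e1, FF_add _ _ (by continuity) (by continuity) μ,
        FF_sub _ _ (by continuity) (by continuity) μ, FF_const_mul, FF_const_mul]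
    have hVpos := variance_pos μ (Gv / Fv)
    rw [hV] at hVpos
    have key : 0 < Hv * Fv - Gv * Gv := by
      have : Hv - 2 * (Gv / Fv) * Gv + (Gv / Fv) ^ 2 * Fv
          = (Hv * Fv - Gv * Gv) / Fv := by field_simp; ring
      rw [this] at hVpos
      exact (div_pos_iff.1 hVpos).resolve_right (fun h => absurd h.2 (not_lt.2 hF.le)) |>.1
    positivity

lemma rr_strictMono : StrictMono rr := by
  apply strictMono_of_deriv_pos
  intro μ
  rw [(rr_deriv_pos μ).1.deriv]
  exact (rr_deriv_pos μ).2

lemma rr_continuous : Continuous rr :=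
  continuous_iff_continuousAt.2 fun μ => (rr_deriv_pos μ).1.differentiableAt.continuousAt

lemma FF_neg (f : ℝ → ℝ) (hf : Function.Periodic f (2 * Real.pi)) (μ : ℝ) :
    FF f (-μ) = ∫ u in (0:ℝ)..(2*Real.pi),
      Real.exp (μ * Real.cos u) * f (u + Real.pi) := by
  have hper : Function.Periodic
      (fun u => Real.exp (μ * Real.cos u) * f (u + Real.pi)) (2 * Real.pi) := by
    intro x
    simp only []
    rw [Real.cos_add_two_pi, show x + 2 * Real.pi + Real.pi = (x + Real.pi) + 2*Real.pi by ring,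
      hf]
  have step1 : (∫ u in (-Real.pi)..Real.pi,
        Real.exp (μ * Real.cos u) * f (u + Real.pi))
      = ∫ u in (0:ℝ)..(2*Real.pi), Real.exp (μ * Real.cos u) * f (u + Real.pi) := by
    have := hper.intervalIntegral_add_eq (-Real.pi) 0
    rw [show -Real.pi + 2*Real.pi = Real.pi by ring, zero_add] at this
    exact this
  have step2 : (∫ u in (-Real.pi)..Real.pi,
        Real.exp (μ * Real.cos u) * f (u + Real.pi))
      = ∫ u in (-Real.pi)..Real.pi,
        (fun θ => Real.exp (-μ * Real.cos θ) * f θ) (u + Real.pi) := by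
    congr 1; ext u
    show _ = Real.exp (-μ * Real.cos (u + Real.pi)) * f (u + Real.pi)
    rw [Real.cos_add_pi]
    ring_nf
  have step3 : (∫ u in (-Real.pi)..Real.pi,
        (fun θ => Real.exp (-μ * Real.cos θ) * f θ) (u + Real.pi))
      = ∫ x in (0:ℝ)..(2*Real.pi), Real.exp (-μ * Real.cos x) * f x := by
    have := intervalIntegral.integral_comp_add_right
      (a := -Real.pi) (b := Real.pi)
      (f := fun θ => Real.exp (-μ * Real.cos θ) * f θ) Real.pi
    rw [show -Real.pi + Real.pi = (0:ℝ) by ring,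
      show Real.pi + Real.pi = 2*Real.pi by ring] at this
    exact this
  rw [FF]
  rw [← step3, ← step2, step1]

lemma rr_odd (μ : ℝ) : rr (-μ) = - rr μ := by
  have h1 : FF (fun _ => (1:ℝ)) (-μ) = FF (fun _ => (1:ℝ)) μ := by
    rw [FF_neg _ (fun x => by simp) μ]; rfl
  have h2 : FF Real.cos (-μ) = - FF Real.cos μ := by
    rw [FF_neg _ (Real.cos_periodic) μ]
    rw [show (FF Real.cos μ) = ∫ θ in (0:ℝ)..(2*Real.pi),
      Real.exp (μ * Real.cos θ) * Real.cos θ from rfl]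
    rw [← intervalIntegral.integral_neg]
    congr 1; ext u
    rw [Real.cos_add_pi]; ring
  rw [rr, rr, h1, h2, neg_div]

lemma F_lower {μ δ : ℝ} (hμ : 0 ≤ μ) (hδ : 0 < δ) (hδ2 : δ ≤ Real.pi / 2) :
    δ * Real.exp (μ * Real.cos δ) ≤ FF (fun _ => 1) μ := by
  have hpi := Real.pi_pos
  have key := integral_ge_sub (fun θ => Real.exp (μ * Real.cos θ) * 1)
    (cont_integrand _ continuous_const μ) (fun θ => by positivity)
    (a := 0) (b := δ) (c := Real.exp (μ * Real.cos δ))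
    le_rfl hδ.le (by linarith)
    (fun θ hθ => by
      have h1 : Real.cos δ ≤ Real.cos θ :=
        Real.cos_le_cos_of_nonneg_of_le_pi hθ.1 (by linarith) hθ.2
      have : μ * Real.cos δ ≤ μ * Real.cos θ := mul_le_mul_of_nonneg_left h1 hμ
      simpa using Real.exp_le_exp.2 this)
  calc δ * Real.exp (μ * Real.cos δ) = Real.exp (μ * Real.cos δ) * (δ - 0) := by ring
    _ ≤ _ := key

lemma log_bound {μ : ℝ} (hμ : 0 < μ) :
    Real.log (FF (fun _ => 1) μ) - Real.log (FF (fun _ => 1) 0) ≤ μ * rr μ := by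
  have hftc : (∫ t in (0:ℝ)..μ, rr t)
      = Real.log (FF (fun _ => 1) μ) - Real.log (FF (fun _ => 1) 0) := by
    apply intervalIntegral.integral_eq_sub_of_hasDerivAt
    · intro t _
      have := (F_hasDerivAt t).log (FF_one_pos t).ne'
      exact this
    · exact rr_continuous.intervalIntegrable _ _
  have hmono : (∫ t in (0:ℝ)..μ, rr t) ≤ ∫ _t in (0:ℝ)..μ, rr μ := by
    apply intervalIntegral.integral_mono_on hμ.le
      (rr_continuous.intervalIntegrable _ _) intervalIntegrable_const
    intro t ht
    exact rr_strictMono.monotone ht.2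
  rw [hftc] at hmono
  simpa using hmono

lemma exists_rr_gt {c : ℝ} (hc : c < 1) : ∃ b : ℝ, c < rr b := by
  have hpi := Real.pi_pos
  -- find δ
  obtain ⟨ε, hε, hball⟩ : ∃ ε > 0, ∀ x : ℝ, |x| < ε → c < Real.cos x := by
    have h1 : Tendsto Real.cos (nhds 0) (nhds 1) := by
      simpa using Real.continuous_cos.tendsto 0
    have h2 : Set.Ioi c ∈ nhds (1:ℝ) := Ioi_mem_nhds hc
    have h3 := h1.eventually (eventually_mem_set.2 h2)
    rw [Metric.eventually_nhds_iff] at h3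
    obtain ⟨ε, hε, h⟩ := h3
    exact ⟨ε, hε, fun x hx => h (by simpa [Real.dist_eq] using hx)⟩
  set δ := min (ε / 2) (Real.pi / 2) with hδdef
  have hδpos : 0 < δ := lt_min (by linarith) (by linarith)
  have hδle : δ ≤ Real.pi / 2 := min_le_right _ _
  have hcosδ : c < Real.cos δ := hball δ (by
    rw [abs_of_pos hδpos]
    calc δ ≤ ε / 2 := min_le_left _ _
      _ < ε := by linarith)
  set K := Real.log (FF (fun _ => 1) 0) - Real.log δ with hK
  set b := max 1 (K / (Real.cos δ - c) + 1) with hb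
  have hb1 : (1:ℝ) ≤ b := le_max_left _ _
  have hbpos : 0 < b := by linarith
  refine ⟨b, ?_⟩
  have hlow : Real.log δ + b * Real.cos δ ≤ Real.log (FF (fun _ => 1) b) := by
    have h1 := F_lower hbpos.le hδpos hδle
    have h2 : Real.log (δ * Real.exp (b * Real.cos δ)) ≤ Real.log (FF (fun _ => 1) b) :=
      Real.log_le_log (by positivity) h1
    rwa [Real.log_mul hδpos.ne' (Real.exp_pos _).ne', Real.log_exp] at h2
  have hbound := log_bound hbpos
  have key : b * Real.cos δ - K ≤ b * rr b := by
    simp only [hK]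
    linarith
  have hKb : K / b < Real.cos δ - c := by
    rcases le_or_gt K 0 with hK0 | hK0
    · have : K / b ≤ 0 := div_nonpos_of_nonpos_of_nonneg hK0 hbpos.le
      linarith
    · have hgt : K / (Real.cos δ - c) < b := by
        have := le_max_right 1 (K / (Real.cos δ - c) + 1)
        linarith
      rw [div_lt_iff₀ hbpos]
      calc K = (K / (Real.cos δ - c)) * (Real.cos δ - c) :=
            (div_mul_cancel₀ K (by linarith : Real.cos δ - c ≠ 0)).symm
        _ < b * (Real.cos δ - c) := by
            apply mul_lt_mul_of_pos_right hgt (by linarith)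
        _ = (Real.cos δ - c) * b := by ring
  have hdiv : Real.cos δ - K / b ≤ rr b := by
    rw [← mul_le_mul_iff_right₀ hbpos]
    have : b * (Real.cos δ - K / b) = b * Real.cos δ - K := by
      field_simp
    rw [this]
    exact key
  linarith

lemma besselI_zero (μ : ℝ) : besselI 0 μ = (1 / (2 * Real.pi)) * FF (fun _ => 1) μ := by
  unfold besselI FF
  norm_num

lemma besselI_one (μ : ℝ) : besselI 1 μ = (1 / (2 * Real.pi)) * FF Real.cos μ := by
  unfold besselI FF
  norm_num

lemma quotient_eq (μ : ℝ) : besselI 1 μ / (2 * besselI 0 μ) = rr μ / 2 := by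
  rw [besselI_zero, besselI_one, rr]
  have hF := (FF_one_pos μ).ne'
  have hπ := Real.pi_ne_zero
  field_simp

/-- The function `q(μ) = I₁(μ)/(2 I₀(μ))` is a bijection from `ℝ` onto `(-1/2, 1/2)`:
it takes values in `(-1/2, 1/2)`, and every `q` in that interval is attained by a
unique `μ ∈ ℝ`. (Existence and uniqueness of the 2D Bingham closure.) -/
theorem bingham_closure_2d_bijective :
    (∀ μ : ℝ, besselI 1 μ / (2 * besselI 0 μ) ∈ Set.Ioo (-(1/2) : ℝ) (1/2)) ∧
    (∀ q ∈ Set.Ioo (-(1/2) : ℝ) (1/2), ∃! μ : ℝ, besselI 1 μ / (2 * besselI 0 μ) = q) := by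
  constructor
  · intro μ
    rw [quotient_eq]
    constructor
    · have := neg_one_lt_rr μ; linarith
    · have := rr_lt_one μ; linarith
  · rintro q ⟨hq1, hq2⟩
    obtain ⟨b, hb⟩ := exists_rr_gt (c := 2 * q) (by linarith)
    obtain ⟨b2, hb2⟩ := exists_rr_gt (c := -(2 * q)) (by linarith)
    have ha : rr (-b2) < 2 * q := by rw [rr_odd]; linarith
    have hab : -b2 < b := rr_strictMono.lt_iff_lt.1 (by linarith)
    have hmem : (2*q) ∈ Set.Ioo (rr (-b2)) (rr b) := ⟨ha, hb⟩
    obtain ⟨μ, _, hμ⟩ := intermediate_value_Ioo hab.le rr_continuous.continuousOn hmem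
    refine ⟨μ, ?_, ?_⟩
    · show besselI 1 μ / (2 * besselI 0 μ) = q
      rw [quotient_eq, hμ]; ring
    · intro y hy
      rw [quotient_eq] at hy
      have : rr y = rr μ := by rw [hμ]; linarith
      exact rr_strictMono.injective this
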